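/- The number of north-east lattice paths in ℤ² from (x₁,y₁) to (x₂,y₂) that stay weakly above the diagonal x = y (assuming y₁ ≥ x₁ and y₂ ≥ x₂) equals C(x₂+y₂−x₁−y₁, x₂−x₁) − C(x₂+y₂−x₁−y₁, x₂−y₁−1) when x₁ ≤ x₂ and y₁ ≤ y₂, and equals 0 otherwise. -/

import Mathlib

/-- A north-east unit step in the integer lattice. -/
def NEStep (p q : ℤ × ℤ) : Prop :=
  q = (p.1 + 1, p.2) ∨ q = (p.1, p.2 + 1)

/-- A north-east lattice path from `a` to `b` staying weakly above the diagonal `x = y`,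
represented as its (nonempty) list of lattice points. -/
def IsNEPathAbove (a b : ℤ × ℤ) (l : List (ℤ × ℤ)) : Prop :=
  l.head? = some a ∧ l.getLast? = some b ∧ l.Chain' NEStep ∧ ∀ p ∈ l, p.1 ≤ p.2

/-- The number of north-east lattice paths from `a` to `b` weakly above the diagonal. -/
noncomputable def latticeCount (a b : ℤ × ℤ) : ℕ :=
  Set.ncard {l : List (ℤ × ℤ) | IsNEPathAbove a b l}

/-- The binomial coefficient `C(n, k)` for integers, equal to `0` if `k < 0` or `k > n`. -/
def intChoose (n k : ℤ) : ℕ :=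
  if 0 ≤ k ∧ k ≤ n then n.toNat.choose k.toNat else 0


def Spaths (a b : ℤ × ℤ) : Set (List (ℤ × ℤ)) := {l | IsNEPathAbove a b l}

lemma nestep_sum {p q : ℤ × ℤ} (h : NEStep p q) : q.1 + q.2 = p.1 + p.2 + 1 := by
  rcases h with h | h <;> subst h <;> simp <;> ring

lemma sum_lemma : ∀ (l : List (ℤ × ℤ)), l.Chain' NEStep → ∀ a b : ℤ × ℤ,
    l.head? = some a → l.getLast? = some b →
    b.1 + b.2 = a.1 + a.2 + l.length - 1
  | [] => by simp
  | [p] => by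
      intro _ a b ha hb
      simp at ha hb
      subst ha; subst hb; simp
  | p :: q :: t => by
      intro hc a b ha hb
      rw [List.Chain', List.isChain_cons_cons] at hc
      have ih := sum_lemma (q :: t) hc.2 q b rfl (by simpa [List.getLast?_cons_cons] using hb)
      simp at ha; subst ha
      have hq := nestep_sum hc.1
      simp [List.length] at ih ⊢
      omega

lemma mem_spaths {a b : ℤ × ℤ} {l : List (ℤ × ℤ)} (h : l ∈ Spaths a b) :
    l.head? = some a ∧ l.getLast? = some b ∧ l.Chain' NEStep ∧ ∀ p ∈ l, p.1 ≤ p.2 := h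

lemma spaths_empty_head {a b : ℤ × ℤ} (h : ¬ a.1 ≤ a.2) : Spaths a b = ∅ := by
  ext l
  simp only [Set.mem_empty_iff_false, iff_false]
  intro hl
  exact h (hl.2.2.2 a (List.mem_of_mem_head? hl.1))

lemma spaths_empty_small {a b : ℤ × ℤ} (hab : a ≠ b)
    (h : b.1 + b.2 - a.1 - a.2 ≤ 0) : Spaths a b = ∅ := by
  ext l
  simp only [Set.mem_empty_iff_false, iff_false]
  intro hl
  obtain ⟨ha, hb, hc, _⟩ := mem_spaths hl
  have hs := sum_lemma l hc a b ha hb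
  have hne : l ≠ [] := by rintro rfl; simp at ha
  have hlen : 1 ≤ l.length := List.length_pos_iff.2 hne
  have : l.length = 1 := by omega
  obtain ⟨x, rfl⟩ := List.length_eq_one_iff.1 this
  simp at ha hb
  exact hab (ha.symm.trans hb)

lemma spaths_self {a : ℤ × ℤ} (h : a.1 ≤ a.2) : Spaths a a = {[a]} := by
  ext l
  constructor
  · intro hl
    obtain ⟨ha, hb, hc, _⟩ := mem_spaths hl
    have hs := sum_lemma l hc a a ha hb
    have hne : l ≠ [] := by rintro rfl; simp at ha
    have hlen : 1 ≤ l.length := List.length_pos_iff.2 hne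
    have : l.length = 1 := by omega
    obtain ⟨x, rfl⟩ := List.length_eq_one_iff.1 this
    simp at ha ⊢
    exact ha
  · intro hl
    simp at hl
    subst hl
    refine ⟨rfl, rfl, ?_, ?_⟩ <;> simp [h, List.Chain']

lemma spaths_decomp {a b : ℤ × ℤ} (ha : a.1 ≤ a.2) (hab : a ≠ b) :
    Spaths a b = (a :: ·) '' (Spaths (a.1 + 1, a.2) b ∪ Spaths (a.1, a.2 + 1) b) := by
  ext l
  constructor
  · intro hl
    obtain ⟨hh, hlast, hch, habove⟩ := mem_spaths hl
    match l, hh with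
    | a' :: t, hh =>
      simp at hh
      subst hh
      match t with
      | [] =>
        simp at hlast
        exact absurd hlast hab
      | q :: t' =>
        rw [List.Chain', List.isChain_cons_cons] at hch
        refine ⟨q :: t', ?_, rfl⟩
        have hmem : q :: t' ∈ Spaths q b :=
          ⟨rfl, by simpa [List.getLast?_cons_cons] using hlast, hch.2,
            fun p hp => habove p (List.mem_cons_of_mem _ hp)⟩
        rcases hch.1 with h | h
        · exact Set.mem_union_left _ (h ▸ hmem)
        · exact Set.mem_union_right _ (h ▸ hmem)
  · rintro ⟨t, ht, rfl⟩
    have key : ∀ q : ℤ × ℤ, NEStep a q → t ∈ Spaths q b → a :: t ∈ Spaths a b := by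
      intro q hstep hmem
      obtain ⟨hh, hlast, hch, habove⟩ := mem_spaths hmem
      have hne : t ≠ [] := by rintro rfl; simp at hh
      refine ⟨rfl, ?_, ?_, ?_⟩
      · obtain ⟨q', t', rfl⟩ : ∃ q' t', t = q' :: t' := by
          cases t with
          | nil => exact absurd rfl hne
          | cons x xs => exact ⟨x, xs, rfl⟩
        rwa [List.getLast?_cons_cons]
      · rw [List.Chain', List.isChain_cons]
        exact ⟨fun y hy => by rw [hh] at hy; simp at hy; exact hy ▸ hstep, hch⟩
      · intro p hp
        rcases List.mem_cons.1 hp with rfl | hp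
        · exact ha
        · exact habove p hp
    rcases ht with ht | ht
    · exact key _ (Or.inl rfl) ht
    · exact key _ (Or.inr rfl) ht

lemma intChoose_neg {n k : ℤ} (h : ¬(0 ≤ k ∧ k ≤ n)) : intChoose n k = 0 :=
  if_neg h

lemma intChoose_zero_zero {n : ℤ} (hn : 0 ≤ n) : intChoose n 0 = 1 := by
  rw [intChoose, if_pos ⟨le_refl 0, hn⟩]
  simp

lemma intChoose_pascal (n k : ℤ) (hn : 1 ≤ n) :
    intChoose n k = intChoose (n - 1) (k - 1) + intChoose (n - 1) k := by
  rcases lt_or_ge k 0 with hk | hk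
  · rw [intChoose_neg (by omega), intChoose_neg (by omega), intChoose_neg (by omega)]
  rcases eq_or_lt_of_le hk with hk0 | hk1
  · rw [← hk0, intChoose_zero_zero (by omega), intChoose_neg (by omega),
      intChoose_zero_zero (by omega)]
  rcases lt_or_ge n k with hkn | hkn
  · rw [intChoose_neg (by omega), intChoose_neg (by omega), intChoose_neg (by omega)]
  -- now 1 ≤ k ≤ n
  rw [intChoose, if_pos ⟨hk, hkn⟩, intChoose, if_pos ⟨by omega, by omega⟩]
  have h1 : n.toNat = (n - 1).toNat + 1 := by omega
  have h2 : k.toNat = (k - 1).toNat + 1 := by omega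
  rw [h1, h2, Nat.choose_succ_succ]
  rcases eq_or_lt_of_le hkn with hkn' | hkn'
  · rw [intChoose_neg (by omega)]
    have : (n - 1).toNat < (k - 1).toNat + 1 := by omega
    rw [Nat.choose_eq_zero_of_lt this]
  · rw [intChoose, if_pos ⟨by omega, by omega⟩]
    have h3 : (k - 1).toNat.succ = k.toNat := by omega
    rw [h3]

lemma cons_inj (a : ℤ × ℤ) : Function.Injective (a :: · : List (ℤ × ℤ) → List (ℤ × ℤ)) :=
  fun x y h => by simpa using h

lemma main_lemma : ∀ m : ℕ, ∀ a b : ℤ × ℤ, a.1 ≤ a.2 → b.1 ≤ b.2 →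
    b.1 + b.2 - a.1 - a.2 = (m : ℤ) →
    (Spaths a b).Finite ∧
      ((Spaths a b).ncard : ℤ) =
        (intChoose (m : ℤ) (b.1 - a.1) : ℤ) - (intChoose (m : ℤ) (b.1 - a.2 - 1) : ℤ) := by
  intro m
  induction m with
  | zero =>
    intro a b ha hb hm
    push_cast at hm
    by_cases hab : a = b
    · subst hab
      rw [spaths_self ha]
      refine ⟨Set.finite_singleton _, ?_⟩
      rw [Set.ncard_singleton]
      simp only [Nat.cast_zero]
      rw [show a.1 - a.1 = 0 by ring, intChoose_zero_zero le_rfl,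
        intChoose_neg (show ¬(0 ≤ a.1 - a.2 - 1 ∧ a.1 - a.2 - 1 ≤ (0:ℤ)) by omega)]
      simp
    · have hne1 : b.1 ≠ a.1 := by
        intro h
        exact hab (Prod.ext h.symm (by omega))
      rw [spaths_empty_small hab (by omega)]
      refine ⟨Set.finite_empty, ?_⟩
      simp only [Nat.cast_zero]
      rw [Set.ncard_empty, intChoose_neg (show ¬(0 ≤ b.1 - a.1 ∧ b.1 - a.1 ≤ (0:ℤ)) by omega),
        intChoose_neg (show ¬(0 ≤ b.1 - a.2 - 1 ∧ b.1 - a.2 - 1 ≤ (0:ℤ)) by omega)]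
      simp
  | succ m ih =>
    intro a b ha hb hm
    push_cast at hm
    have hab : a ≠ b := by rintro rfl; omega
    -- east subpaths
    have hE : (Spaths (a.1 + 1, a.2) b).Finite ∧
        ((Spaths (a.1 + 1, a.2) b).ncard : ℤ) =
          (intChoose (m : ℤ) (b.1 - a.1 - 1) : ℤ) - (intChoose (m : ℤ) (b.1 - a.2 - 1) : ℤ) := by
      rcases lt_or_ge a.1 a.2 with h | h
      · have := ih (a.1 + 1, a.2) b (by simpa using h) hb (by simp; omega)
        simpa [show b.1 - (a.1 + 1) = b.1 - a.1 - 1 by ring] using this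
      · have haa : a.2 = a.1 := le_antisymm h ha
        rw [spaths_empty_head (by simp; omega)]
        refine ⟨Set.finite_empty, ?_⟩
        rw [Set.ncard_empty, haa]
        simp
    -- north subpaths
    have hN : (Spaths (a.1, a.2 + 1) b).Finite ∧
        ((Spaths (a.1, a.2 + 1) b).ncard : ℤ) =
          (intChoose (m : ℤ) (b.1 - a.1) : ℤ) - (intChoose (m : ℤ) (b.1 - a.2 - 2) : ℤ) := by
      have := ih (a.1, a.2 + 1) b (by simp; omega) hb (by simp; omega)
      simpa [show b.1 - (a.2 + 1) - 1 = b.1 - a.2 - 2 by ring] using this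
    have hdisj : Disjoint (Spaths (a.1 + 1, a.2) b) (Spaths (a.1, a.2 + 1) b) := by
      rw [Set.disjoint_left]
      intro l h1 h2
      have e1 := (mem_spaths h1).1
      have e2 := (mem_spaths h2).1
      rw [e1] at e2
      simp [Prod.ext_iff] at e2
    rw [spaths_decomp ha hab]
    refine ⟨((hE.1.union hN.1).image _), ?_⟩
    rw [Set.ncard_image_of_injective _ (cons_inj a),
      Set.ncard_union_eq hdisj hE.1 hN.1]
    push_cast
    rw [hE.2, hN.2]
    rw [intChoose_pascal ((m : ℤ) + 1) (b.1 - a.1) (by omega),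
      intChoose_pascal ((m : ℤ) + 1) (b.1 - a.2 - 1) (by omega)]
    rw [show ((m : ℤ) + 1) - 1 = (m : ℤ) by ring,
      show b.1 - a.2 - 1 - 1 = b.1 - a.2 - 2 by ring]
    push_cast
    ring

/-- The number of north-east lattice paths from `(x₁,y₁)` to `(x₂,y₂)` weakly above the
diagonal `x = y` equals `C(x₂+y₂−x₁−y₁, x₂−x₁) − C(x₂+y₂−x₁−y₁, x₂−y₁−1)` when
`x₁ ≤ x₂` and `y₁ ≤ y₂`, and `0` otherwise. -/
theorem stmt4 (x₁ y₁ x₂ y₂ : ℤ) (h₁ : x₁ ≤ y₁) (h₂ : x₂ ≤ y₂) :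
    (latticeCount (x₁, y₁) (x₂, y₂) : ℤ) =
      if x₁ ≤ x₂ ∧ y₁ ≤ y₂ then
        (intChoose (x₂ + y₂ - x₁ - y₁) (x₂ - x₁) : ℤ) -
          (intChoose (x₂ + y₂ - x₁ - y₁) (x₂ - y₁ - 1) : ℤ)
      else 0 := by
  have hlc : latticeCount (x₁, y₁) (x₂, y₂) = (Spaths (x₁, y₁) (x₂, y₂)).ncard := rfl
  rcases lt_or_ge (x₂ + y₂ - x₁ - y₁) 0 with hm | hm
  · have hab : ((x₁, y₁) : ℤ × ℤ) ≠ (x₂, y₂) := by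
      simp only [ne_eq, Prod.mk.injEq, not_and]
      intro h1 h2
      omega
    rw [hlc, spaths_empty_small hab (by simp; omega), Set.ncard_empty,
      if_neg (by omega)]
    simp
  · obtain ⟨m, hm'⟩ := Int.eq_ofNat_of_zero_le hm
    have key := (main_lemma m (x₁, y₁) (x₂, y₂) h₁ h₂ (by simpa using hm')).2
    rw [← hm'] at key
    simp only at key
    by_cases hcond : x₁ ≤ x₂ ∧ y₁ ≤ y₂
    · rw [if_pos hcond, hlc]
      exact key
    · rw [if_neg hcond, hlc, key,
        intChoose_neg (show ¬(0 ≤ x₂ - x₁ ∧ x₂ - x₁ ≤ x₂ + y₂ - x₁ - y₁) by omega),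
        intChoose_neg (show ¬(0 ≤ x₂ - y₁ - 1 ∧ x₂ - y₁ - 1 ≤ x₂ + y₂ - x₁ - y₁) by omega)]
      simp
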